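/- Suppose X is a regular topological space, Γ is a group of homeomorphisms of X, and O is an orbit of Γ such that X is strong Choquet over O (player B has a winning strategy in the strong Choquet game on X in which all points chosen by player A are required to lie in O). Suppose that for each n ∈ ℕ, V_n ⊆ X × X is a G_δ subset such that V_n ∩ (closure(O) × closure(O)) is dense in closure(O) × closure(O). Then there is a map φ : 2^ℕ → 𝒫(X) such that for all y, z ∈ 2^ℕ: (i) φ(y) is a nonempty closed G_δ subset of X; (ii) if y E₀ z then there is γ ∈ Γ with γ(φ(z)) = φ(y) (the image of the set φ(z) under γ equals φ(y)); (iii) if ¬(y E₀ z) then φ(y) × φ(z) ⊆ ⋂_{n∈ℕ} V_n. -/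

import Mathlib

/-- The history (most recent move first) of player A's first `n` moves, where
a move in the strong Choquet game is a pair (open set, point). -/
def scHist {X : Type*} (f : ℕ → Set X × X) : ℕ → List (Set X × X)
  | 0 => []
  | n + 1 => f n :: scHist f n

/-- Legality of a history of moves of player A (most recent first) in the
strong Choquet game on `X` in which A's points are required to lie in `A`,
when player B plays according to the strategy `σ`: each move `(U, x)` must
consist of an open set `U` with `x ∈ U ∩ A`, and `U` must be contained in B's
previous move (which is `σ` applied to the previous history). -/
def SCLegal {X : Type*} [TopologicalSpace X] (A : Set X)
    (σ : List (Set X × X) → Set X) : List (Set X × X) → Prop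
  | [] => True
  | (U, x) :: rest =>
      SCLegal A σ rest ∧ IsOpen U ∧ x ∈ U ∧ x ∈ A ∧ (rest ≠ [] → U ⊆ σ rest)

/-- `X` is strong Choquet over `A`: player B has a winning strategy in the
strong Choquet game on `X` where player A's chosen points lie in `A`.  A
strategy assigns to each history of A's moves an open set for B; it is winning
if B's moves are always legal (`xₙ ∈ Vₙ ⊆ Uₙ`) and every infinite legal play
has nonempty intersection `⋂ₙ Vₙ`. -/
def StrongChoquetOver (X : Type*) [TopologicalSpace X] (A : Set X) : Prop :=
  ∃ σ : List (Set X × X) → Set X,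
    (∀ (U : Set X) (x : X) (rest : List (Set X × X)),
        SCLegal A σ ((U, x) :: rest) →
          IsOpen (σ ((U, x) :: rest)) ∧ x ∈ σ ((U, x) :: rest) ∧
            σ ((U, x) :: rest) ⊆ U) ∧
    (∀ f : ℕ → Set X × X, (∀ n : ℕ, SCLegal A σ (scHist f n)) →
        (⋂ n : ℕ, σ (scHist f (n + 1))).Nonempty)


/-- `E₀`: eventual equality on Cantor space. -/
def E0 (x y : ℕ → Bool) : Prop := ∃ N : ℕ, ∀ n ≥ N, x n = y n

/-- A group of homeomorphisms of `X`: a subgroup of the group of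
self-homeomorphisms of `X` under composition. -/
def IsHomeoGroup {X : Type*} [TopologicalSpace X] (Γ : Set (X ≃ₜ X)) : Prop :=
  Homeomorph.refl X ∈ Γ ∧ (∀ γ ∈ Γ, γ.symm ∈ Γ) ∧
    ∀ γ₁ ∈ Γ, ∀ γ₂ ∈ Γ, γ₁.trans γ₂ ∈ Γ

namespace S11

open Set

variable {X : Type*} [TopologicalSpace X]

structure Ctx (X : Type*) [TopologicalSpace X] where
  Γ : Set (X ≃ₜ X)
  O : Set X
  x0 : X
  σ : List (Set X × X) → Set X
  W : ℕ → ℕ → Set (X × X)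
  hrefl : Homeomorph.refl X ∈ Γ
  hsymm : ∀ γ ∈ Γ, γ.symm ∈ Γ
  htrans : ∀ γ₁ ∈ Γ, ∀ γ₂ ∈ Γ, γ₁.trans γ₂ ∈ Γ
  hO : O = {y : X | ∃ γ ∈ Γ, γ x0 = y}
  hσ1 : ∀ (U : Set X) (x : X) (rest : List (Set X × X)),
      SCLegal O σ ((U, x) :: rest) →
        IsOpen (σ ((U, x) :: rest)) ∧ x ∈ σ ((U, x) :: rest) ∧ σ ((U, x) :: rest) ⊆ U
  hWopen : ∀ k m, IsOpen (W k m)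
  hD : ∀ (k : ℕ) (A B : Set X), IsOpen A → IsOpen B → (A ∩ O).Nonempty →
      (B ∩ O).Nonempty → ∃ a b : X, a ∈ A ∧ b ∈ B ∧ a ∈ closure O ∧ b ∈ closure O ∧
        ∀ m, (a, b) ∈ W k m

variable (c : Ctx X)

lemma Ctx.x0_mem : c.x0 ∈ c.O := by
  rw [c.hO]; exact ⟨Homeomorph.refl X, c.hrefl, rfl⟩

lemma Ctx.O_moves {a : X} (g : X ≃ₜ X) (hg : g ∈ c.Γ) (ha : a ∈ c.O) : g a ∈ c.O := by
  rw [c.hO] at ha ⊢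
  obtain ⟨γ, hγ, rfl⟩ := ha
  exact ⟨γ.trans g, c.htrans γ hγ g hg, rfl⟩

lemma Ctx.O_trans {a b : X} (ha : a ∈ c.O) (hb : b ∈ c.O) : ∃ g ∈ c.Γ, g a = b := by
  rw [c.hO] at ha hb
  obtain ⟨γ₁, h₁, rfl⟩ := ha
  obtain ⟨γ₂, h₂, rfl⟩ := hb
  refine ⟨γ₁.symm.trans γ₂, c.htrans _ (c.hsymm _ h₁) _ h₂, ?_⟩
  simp

/-- Data of the construction: for each finite binary string (most recent bit first),
an open set, a point, and a homeomorphism. -/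
structure Dat (X : Type*) [TopologicalSpace X] where
  U : List Bool → Set X
  x : List Bool → X
  g : List Bool → X ≃ₜ X

variable {c} in
def hist (d : Dat X) : List Bool → List (Set X × X)
  | [] => []
  | i :: s => (d.U (i :: s), d.x (i :: s)) :: hist d s

@[simp] lemma hist_nil (d : Dat X) : hist d [] = [] := rfl
@[simp] lemma hist_cons (d : Dat X) (i : Bool) (s : List Bool) :
    hist d (i :: s) = (d.U (i :: s), d.x (i :: s)) :: hist d s := rfl

lemma hist_eq_nil_iff (d : Dat X) (s : List Bool) : hist d s = [] ↔ s = [] := by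
  cases s <;> simp

/-- The invariant carried through the construction, for strings of length `≤ n`. -/
structure Inv (c : Ctx X) (n : ℕ) (d : Dat X) : Prop where
  root_U : d.U [] = Set.univ
  root_x : d.x [] = c.x0
  isOpen : ∀ s : List Bool, s.length ≤ n → IsOpen (d.U s)
  mem : ∀ s : List Bool, s.length ≤ n → d.x s ∈ d.U s
  memO : ∀ s : List Bool, s.length ≤ n → d.x s ∈ c.O
  gmem : ∀ s : List Bool, s.length ≤ n → d.g s ∈ c.Γ
  gx : ∀ s : List Bool, s.length ≤ n → d.g s c.x0 = d.x s
  legal : ∀ s : List Bool, s.length ≤ n → SCLegal c.O c.σ (hist d s)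
  closU : ∀ (i : Bool) (s : List Bool), (i :: s).length ≤ n →
      closure (d.U (i :: s)) ⊆ d.U s
  clos : ∀ (i : Bool) (s : List Bool), (i :: s).length ≤ n → s ≠ [] →
      closure (d.U (i :: s)) ⊆ c.σ (hist d s)
  sand : ∀ (i : Bool) (s t : List Bool), s.length = t.length → (i :: s).length ≤ n →
      ∀ z ∈ d.U (i :: s), d.g t ((d.g s).symm z) ∈ d.U t
  coh : ∀ (i : Bool) (s t : List Bool), s.length = t.length → (i :: s).length ≤ n →
      (d.g (i :: t)).symm.trans (d.g (i :: s)) = (d.g t).symm.trans (d.g s)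
  wcond : ∀ (i j : Bool) (s t : List Bool), i ≠ j → s.length = t.length →
      (i :: s).length ≤ n → ∀ k m : ℕ, k < (i :: s).length → m < (i :: s).length →
      (d.U (i :: s)) ×ˢ (d.U (j :: t)) ⊆ c.W k m

lemma hist_congr {d d' : Dat X} {n : ℕ}
    (h : ∀ s : List Bool, s.length ≤ n → d'.U s = d.U s ∧ d'.x s = d.x s) :
    ∀ s : List Bool, s.length ≤ n → hist d' s = hist d s := by
  intro s
  induction s with
  | nil => simp
  | cons i s ih =>
    intro hlen
    have hs : s.length ≤ n := by simp at hlen; omega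
    rw [hist_cons, hist_cons, (h _ hlen).1, (h _ hlen).2, ih hs]

lemma Inv.of_agree {d d' : Dat X} {n : ℕ}
    (h : ∀ s : List Bool, s.length ≤ n →
      d'.U s = d.U s ∧ d'.x s = d.x s ∧ d'.g s = d.g s)
    (inv : Inv c n d) : Inv c n d' := by
  have hh : ∀ s : List Bool, s.length ≤ n → hist d' s = hist d s :=
    hist_congr (fun s hs => ⟨(h s hs).1, (h s hs).2.1⟩)
  have h0 : ([] : List Bool).length ≤ n := by simp
  have lcons : ∀ (i : Bool) (s : List Bool), (i :: s).length ≤ n → s.length ≤ n := by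
    intro i s hs; simp at hs; omega
  refine ⟨?_, ?_, ?_, ?_, ?_, ?_, ?_, ?_, ?_, ?_, ?_, ?_, ?_⟩
  · rw [(h _ h0).1, inv.root_U]
  · rw [(h _ h0).2.1, inv.root_x]
  · intro s hs; rw [(h s hs).1]; exact inv.isOpen s hs
  · intro s hs; rw [(h s hs).1, (h s hs).2.1]; exact inv.mem s hs
  · intro s hs; rw [(h s hs).2.1]; exact inv.memO s hs
  · intro s hs; rw [(h s hs).2.2]; exact inv.gmem s hs
  · intro s hs; rw [(h s hs).2.2, (h s hs).2.1]; exact inv.gx s hs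
  · intro s hs; rw [hh s hs]; exact inv.legal s hs
  · intro i s hs; rw [(h _ hs).1, (h s (lcons i s hs)).1]; exact inv.closU i s hs
  · intro i s hs hne; rw [(h _ hs).1, hh s (lcons i s hs)]; exact inv.clos i s hs hne
  · intro i s t hst hs z hz
    have ht : t.length ≤ n := by
      have := lcons i s hs; omega
    rw [(h _ hs).1] at hz
    rw [(h t ht).2.2, (h s (lcons i s hs)).2.2, (h t ht).1]
    exact inv.sand i s t hst hs z hz
  · intro i s t hst hs
    have ht : t.length ≤ n := by have := lcons i s hs; omega
    have hit : (i :: t).length ≤ n := by simp at hs ⊢; omega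
    rw [(h _ hs).2.2, (h _ ?_).2.2, (h t ht).2.2, (h s (lcons i s hs)).2.2]
    · exact inv.coh i s t hst hs
    · simp at hs ⊢; omega
  · intro i j s t hij hst hs k m hk hm
    have ht : (j :: t).length ≤ n := by simp at hs ⊢; omega
    rw [(h _ hs).1, (h _ ht).1]
    exact inv.wcond i j s t hij hst hs k m hk hm


/-- Player B's response after the history of A's moves along `s`. -/
def R (c : Ctx X) (d : Dat X) : List Bool → Set X
  | [] => Set.univ
  | i :: s => c.σ (hist d (i :: s))

lemma R_spec {n : ℕ} {d : Dat X} (inv : Inv c n d) :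
    ∀ s : List Bool, s.length ≤ n →
      IsOpen (R c d s) ∧ d.x s ∈ R c d s ∧ R c d s ⊆ d.U s := by
  intro s hs
  cases s with
  | nil =>
    refine ⟨isOpen_univ, trivial, ?_⟩
    rw [inv.root_U]
    exact fun _ _ => trivial
  | cons i s =>
    have hleg := inv.legal _ hs
    rw [hist_cons] at hleg
    exact c.hσ1 _ _ _ hleg

/-- All binary strings of length `n`. -/
def allBL : ℕ → List (List Bool)
  | 0 => [[]]
  | n + 1 => (allBL n).flatMap fun s => [true :: s, false :: s]

lemma mem_allBL : ∀ (n : ℕ) (s : List Bool), s ∈ allBL n ↔ s.length = n := by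
  intro n
  induction n with
  | zero => intro s; simp [allBL]
  | succ n ih =>
    intro s
    simp only [allBL, List.mem_flatMap]
    constructor
    · rintro ⟨t, ht, hs⟩
      have := (ih t).mp ht
      simp at hs
      rcases hs with rfl | rfl <;> simp [this]
    · intro hlen
      cases s with
      | nil => simp at hlen
      | cons i t =>
        refine ⟨t, (ih t).mpr (by simpa using hlen), ?_⟩
        cases i <;> simp

/-- Refine a pair of open boxes meeting `O` into boxes whose product is inside
`W k m` for all `m ≤ M`. -/
lemma Ctx.refine (k M : ℕ) (A B : Set X) (hA : IsOpen A) (hB : IsOpen B)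
    (hAO : (A ∩ c.O).Nonempty) (hBO : (B ∩ c.O).Nonempty) :
    ∃ P Q : Set X, IsOpen P ∧ IsOpen Q ∧ (P ∩ c.O).Nonempty ∧ (Q ∩ c.O).Nonempty ∧
      P ⊆ A ∧ Q ⊆ B ∧ ∀ m ≤ M, P ×ˢ Q ⊆ c.W k m := by
  obtain ⟨a, b, haA, hbB, hacl, hbcl, hab⟩ := c.hD k A B hA hB hAO hBO
  have hG : IsOpen (⋂ m ∈ Finset.range (M + 1), c.W k m) :=
    isOpen_biInter_finset (fun m _ => c.hWopen k m)
  have habG : (a, b) ∈ ⋂ m ∈ Finset.range (M + 1), c.W k m := by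
    simp only [Set.mem_iInter]
    intro m _
    exact hab m
  rw [isOpen_prod_iff] at hG
  obtain ⟨u, v, hu, hv, hau, hbv, huv⟩ := hG a b habG
  have hPO : ((A ∩ u) ∩ c.O).Nonempty := by
    have : a ∈ closure c.O := hacl
    rw [mem_closure_iff] at this
    obtain ⟨o, ho1, ho2⟩ := this (A ∩ u) (hA.inter hu) ⟨haA, hau⟩
    exact ⟨o, ho1, ho2⟩
  have hQO : ((B ∩ v) ∩ c.O).Nonempty := by
    rw [mem_closure_iff] at hbcl
    obtain ⟨o, ho1, ho2⟩ := hbcl (B ∩ v) (hB.inter hv) ⟨hbB, hbv⟩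
    exact ⟨o, ho1, ho2⟩
  refine ⟨A ∩ u, B ∩ v, hA.inter hu, hB.inter hv, hPO, hQO, inter_subset_left,
    inter_subset_left, ?_⟩
  intro m hm
  intro p hp
  have : p ∈ u ×ˢ v := ⟨hp.1.2, hp.2.2⟩
  have := huv this
  simp only [Set.mem_iInter] at this
  exact this m (by simp; omega)

/-- The iterated shrinking loop: handle a finite list of tasks
`(g₁, g₂, k)`, each demanding `(g₁ '' A') ×ˢ (g₂ '' B') ⊆ W k m` for `m ≤ M`. -/
lemma Ctx.loop (M : ℕ) (L : List ((X ≃ₜ X) × (X ≃ₜ X) × ℕ))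
    (hL : ∀ p ∈ L, p.1 ∈ c.Γ ∧ p.2.1 ∈ c.Γ) :
    ∀ A B : Set X, IsOpen A → IsOpen B → (A ∩ c.O).Nonempty → (B ∩ c.O).Nonempty →
    ∃ A' B' : Set X, IsOpen A' ∧ IsOpen B' ∧ (A' ∩ c.O).Nonempty ∧
      (B' ∩ c.O).Nonempty ∧ A' ⊆ A ∧ B' ⊆ B ∧
      ∀ p ∈ L, ∀ m ≤ M, (p.1 '' A') ×ˢ (p.2.1 '' B') ⊆ c.W p.2.2 m := by
  induction L with
  | nil =>
    intro A B hA hB hAO hBO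
    exact ⟨A, B, hA, hB, hAO, hBO, subset_rfl, subset_rfl, by simp⟩
  | cons p L ih =>
    intro A B hA hB hAO hBO
    obtain ⟨A1, B1, hA1, hB1, hA1O, hB1O, hA1A, hB1B, hcond⟩ :=
      ih (fun q hq => hL q (List.mem_cons_of_mem _ hq)) A B hA hB hAO hBO
    obtain ⟨hg1, hg2⟩ := hL p List.mem_cons_self
    have himA : IsOpen (p.1 '' A1) := p.1.isOpenMap _ hA1
    have himB : IsOpen (p.2.1 '' B1) := p.2.1.isOpenMap _ hB1
    have himAO : ((p.1 '' A1) ∩ c.O).Nonempty := by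
      obtain ⟨a, haA, haO⟩ := hA1O
      exact ⟨p.1 a, ⟨a, haA, rfl⟩, c.O_moves p.1 hg1 haO⟩
    have himBO : ((p.2.1 '' B1) ∩ c.O).Nonempty := by
      obtain ⟨b, hbB, hbO⟩ := hB1O
      exact ⟨p.2.1 b, ⟨b, hbB, rfl⟩, c.O_moves p.2.1 hg2 hbO⟩
    obtain ⟨P, Q, hP, hQ, hPO, hQO, hPsub, hQsub, hPQ⟩ :=
      c.refine p.2.2 M (p.1 '' A1) (p.2.1 '' B1) himA himB himAO himBO
    refine ⟨A1 ∩ p.1 ⁻¹' P, B1 ∩ p.2.1 ⁻¹' Q,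
      hA1.inter (hP.preimage p.1.continuous),
      hB1.inter (hQ.preimage p.2.1.continuous), ?_, ?_, ?_, ?_, ?_⟩
    · obtain ⟨o, ⟨hoP, hoO⟩⟩ := hPO
      obtain ⟨a, haA1, ha⟩ := hPsub hoP
      refine ⟨a, ⟨haA1, by simp [ha, hoP]⟩, ?_⟩
      have : p.1.symm o ∈ c.O := c.O_moves p.1.symm (c.hsymm _ hg1) hoO
      have ha2 : a = p.1.symm o := by
        rw [← ha]; simp
      rwa [ha2]
    · obtain ⟨o, ⟨hoQ, hoO⟩⟩ := hQO
      obtain ⟨b, hbB1, hb⟩ := hQsub hoQ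
      refine ⟨b, ⟨hbB1, by simp [hb, hoQ]⟩, ?_⟩
      have : p.2.1.symm o ∈ c.O := c.O_moves p.2.1.symm (c.hsymm _ hg2) hoO
      have hb2 : b = p.2.1.symm o := by rw [← hb]; simp
      rwa [hb2]
    · exact inter_subset_left.trans hA1A
    · exact inter_subset_left.trans hB1B
    · intro q hq m hm
      rcases List.mem_cons.mp hq with rfl | hq'
      · intro z hz
        obtain ⟨⟨a, ⟨haA, haP⟩, ha⟩, ⟨b, ⟨hbB, hbQ⟩, hb⟩⟩ := hz
        exact hPQ m hm ⟨ha ▸ haP, hb ▸ hbQ⟩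
      · exact fun z hz => hcond q hq' m hm
          ⟨Set.image_mono inter_subset_left hz.1,
           Set.image_mono inter_subset_left hz.2⟩


lemma SCLegal_cons {A : Set X} {σ : List (Set X × X) → Set X} {U : Set X} {x : X}
    {rest : List (Set X × X)} :
    SCLegal A σ ((U, x) :: rest) ↔
      SCLegal A σ rest ∧ IsOpen U ∧ x ∈ U ∧ x ∈ A ∧ (rest ≠ [] → U ⊆ σ rest) :=
  Iff.rfl

lemma R_eq_sigma (d : Dat X) {s : List Bool} (hs : s ≠ []) :
    R c d s = c.σ (hist d s) := by
  cases s with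
  | nil => exact absurd rfl hs
  | cons i s => rfl

/-- The inductive step of the construction. -/
lemma step [RegularSpace X] {n : ℕ} {d : Dat X} (inv : Inv c n d) :
    ∃ d' : Dat X,
      (∀ s : List Bool, s.length ≤ n →
        d'.U s = d.U s ∧ d'.x s = d.x s ∧ d'.g s = d.g s) ∧ Inv c (n + 1) d' := by
  classical
  have hR := R_spec c inv
  -- the common part of all of B's responses, pulled back to base coordinates
  set Rstar : Set X := ⋂ t ∈ allBL n, (d.g t) ⁻¹' (R c d t) with hRstar
  have hRstarOpen : IsOpen Rstar :=
    (List.finite_toSet (allBL n)).isOpen_biInter (fun t ht =>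
      ((hR t (le_of_eq ((mem_allBL n t).mp ht))).1).preimage (d.g t).continuous)
  have hx0star : c.x0 ∈ Rstar := by
    rw [hRstar]
    refine Set.mem_iInter₂.mpr (fun t ht => ?_)
    have hlen := le_of_eq ((mem_allBL n t).mp ht)
    have := (hR t hlen).2.1
    simpa [inv.gx t hlen] using this
  have hRstarO : (Rstar ∩ c.O).Nonempty := ⟨c.x0, hx0star, c.x0_mem⟩
  have hRstarsub : ∀ t : List Bool, t.length = n → ∀ a ∈ Rstar, d.g t a ∈ R c d t := by
    intro t ht a ha
    rw [hRstar] at ha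
    exact Set.mem_iInter₂.mp ha t ((mem_allBL n t).mpr ht)
  -- list of tasks for the shrinking loop
  set L1 : List ((X ≃ₜ X) × (X ≃ₜ X) × ℕ) :=
    (allBL n).flatMap fun s => (allBL n).flatMap fun t =>
      (List.range (n + 1)).map fun k => (d.g s, d.g t, k) with hL1def
  have hL1mem : ∀ s t : List Bool, s.length = n → t.length = n → ∀ k ≤ n,
      (d.g s, d.g t, k) ∈ L1 := by
    intro s t hs ht k hk
    rw [hL1def]
    refine List.mem_flatMap.mpr ⟨s, (mem_allBL n s).mpr hs, ?_⟩
    refine List.mem_flatMap.mpr ⟨t, (mem_allBL n t).mpr ht, ?_⟩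
    exact List.mem_map.mpr ⟨k, List.mem_range.mpr (by omega), rfl⟩
  have hL1good : ∀ p ∈ L1, p.1 ∈ c.Γ ∧ p.2.1 ∈ c.Γ := by
    intro p hp
    rw [hL1def] at hp
    obtain ⟨s, hs, hp⟩ := List.mem_flatMap.mp hp
    obtain ⟨t, ht, hp⟩ := List.mem_flatMap.mp hp
    obtain ⟨k, _, rfl⟩ := List.mem_map.mp hp
    exact ⟨inv.gmem s (le_of_eq ((mem_allBL n s).mp hs)),
      inv.gmem t (le_of_eq ((mem_allBL n t).mp ht))⟩
  obtain ⟨P1, P0, hP1, hP0, hP1O, hP0O, hP1sub, hP0sub, hPcond⟩ :=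
    c.loop n L1 hL1good Rstar Rstar hRstarOpen hRstarOpen hRstarO hRstarO
  obtain ⟨A0, A1, hA0op, hA1op, hA0O, hA1O, hA0sub, hA1sub, hAcond⟩ :=
    c.loop n L1 hL1good P0 P1 hP0 hP1 hP0O hP1O
  set A : Bool → Set X := fun b => if b then A1 else A0 with hAdef
  have hAopen : ∀ i, IsOpen (A i) := by
    intro i; cases i
    · simpa [hAdef] using hA0op
    · simpa [hAdef] using hA1op
  have hAO : ∀ i, (A i ∩ c.O).Nonempty := by
    intro i; cases i
    · simpa [hAdef] using hA0O
    · simpa [hAdef] using hA1O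
  have hAsub : ∀ i, A i ⊆ Rstar := by
    intro i; cases i
    · simpa [hAdef] using hA0sub.trans hP0sub
    · simpa [hAdef] using hA1sub.trans hP1sub
  -- the two key product conditions
  have hW10 : ∀ s t : List Bool, s.length = n → t.length = n → ∀ k ≤ n, ∀ m ≤ n,
      (d.g s '' A true) ×ˢ (d.g t '' A false) ⊆ c.W k m := by
    intro s t hs ht k hk m hm
    have := hPcond (d.g s, d.g t, k) (hL1mem s t hs ht k hk) m hm
    refine subset_trans ?_ this
    exact Set.prod_mono (Set.image_mono (by simpa [hAdef] using hA1sub))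
      (Set.image_mono (by simpa [hAdef] using hA0sub))
  have hW01 : ∀ s t : List Bool, s.length = n → t.length = n → ∀ k ≤ n, ∀ m ≤ n,
      (d.g s '' A false) ×ˢ (d.g t '' A true) ⊆ c.W k m := by
    intro s t hs ht k hk m hm
    have := hAcond (d.g s, d.g t, k) (hL1mem s t hs ht k hk) m hm
    refine subset_trans ?_ this
    exact Set.prod_mono (Set.image_mono (by simp [hAdef]))
      (Set.image_mono (by simp [hAdef]))
  -- base points and group elements for the two children
  have hwex : ∀ i : Bool, ∃ w : X, w ∈ A i ∧ w ∈ c.O := by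
    intro i; obtain ⟨w, hw1, hw2⟩ := hAO i; exact ⟨w, hw1, hw2⟩
  choose w hwA hwO using hwex
  have hhex : ∀ i : Bool, ∃ h : X ≃ₜ X, h ∈ c.Γ ∧ h c.x0 = w i :=
    fun i => c.O_trans c.x0_mem (hwO i)
  choose h hhΓ hhx0 using hhex
  -- choose the children neighborhoods by regularity
  have hNex : ∀ (i : Bool) (s : List Bool), ∃ N : Set X, s.length = n →
      IsOpen N ∧ d.g s (w i) ∈ N ∧ closure N ⊆ d.g s '' A i := by
    intro i s
    by_cases hs : s.length = n
    · have hGopen : IsOpen (d.g s '' A i) := (d.g s).isOpenMap _ (hAopen i)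
      have hmem : d.g s (w i) ∈ d.g s '' A i := ⟨w i, hwA i, rfl⟩
      obtain ⟨t, htn, htc, hts⟩ :=
        exists_mem_nhds_isClosed_subset (hGopen.mem_nhds hmem)
      refine ⟨interior t, fun _ => ⟨isOpen_interior, ?_, ?_⟩⟩
      · exact mem_interior_iff_mem_nhds.mpr htn
      · exact (closure_minimal interior_subset htc).trans hts
    · exact ⟨∅, fun h => absurd h hs⟩
  choose N hN using hNex
  -- the new data
  set d' : Dat X := ⟨fun s => if s.length = n + 1 then N s.headI s.tail else d.U s,
          fun s => if s.length = n + 1 then d.g s.tail (w s.headI) else d.x s,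
          fun s => if s.length = n + 1 then (h s.headI).trans (d.g s.tail) else d.g s⟩
    with hd'def
  have hagree : ∀ s : List Bool, s.length ≤ n →
      d'.U s = d.U s ∧ d'.x s = d.x s ∧ d'.g s = d.g s := by
    intro s hs
    have hne : ¬ (s.length = n + 1) := by omega
    rw [hd'def]
    simp only [if_neg hne]
    exact ⟨trivial, trivial, trivial⟩
  have hU' : ∀ (i : Bool) (s : List Bool), s.length = n → d'.U (i :: s) = N i s := by
    intro i s hs
    rw [hd'def]
    simp [hs]
  have hx' : ∀ (i : Bool) (s : List Bool), s.length = n →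
      d'.x (i :: s) = d.g s (w i) := by
    intro i s hs; rw [hd'def]; simp [hs]
  have hg' : ∀ (i : Bool) (s : List Bool), s.length = n →
      d'.g (i :: s) = (h i).trans (d.g s) := by
    intro i s hs; rw [hd'def]; simp [hs]
  have hhist : ∀ s : List Bool, s.length ≤ n → hist d' s = hist d s :=
    hist_congr (fun s hs => ⟨(hagree s hs).1, (hagree s hs).2.1⟩)
  have invd' : Inv c n d' := Inv.of_agree c hagree inv
  have himgR : ∀ (i : Bool) (t : List Bool), t.length = n →
      d.g t '' A i ⊆ R c d t := by
    rintro i t ht x ⟨a, ha, rfl⟩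
    exact hRstarsub t ht a (hAsub i ha)
  have hclosR : ∀ (i : Bool) (s : List Bool) (hs : s.length = n),
      closure (d'.U (i :: s)) ⊆ R c d s := by
    intro i s hs
    rw [hU' i s hs]
    exact ((hN i s hs).2.2).trans (himgR i s hs)
  have hsubA : ∀ (i : Bool) (s : List Bool) (hs : s.length = n),
      d'.U (i :: s) ⊆ d.g s '' A i := by
    intro i s hs
    rw [hU' i s hs]
    exact subset_closure.trans (hN i s hs).2.2
  refine ⟨d', hagree, ?_⟩
  refine ⟨?_, ?_, ?_, ?_, ?_, ?_, ?_, ?_, ?_, ?_, ?_, ?_, ?_⟩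
  · rw [(hagree [] (by simp)).1, inv.root_U]
  · rw [(hagree [] (by simp)).2.1, inv.root_x]
  · -- isOpen
    intro s hs
    by_cases hsn : s.length = n + 1
    · cases s with
      | nil => simp at hsn
      | cons i t =>
        have htn : t.length = n := by simpa using hsn
        rw [hU' i t htn]
        exact (hN i t htn).1
    · exact invd'.isOpen s (by omega)
  · -- mem
    intro s hs
    by_cases hsn : s.length = n + 1
    · cases s with
      | nil => simp at hsn
      | cons i t =>
        have htn : t.length = n := by simpa using hsn
        rw [hU' i t htn, hx' i t htn]
        exact (hN i t htn).2.1
    · exact invd'.mem s (by omega)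
  · -- memO
    intro s hs
    by_cases hsn : s.length = n + 1
    · cases s with
      | nil => simp at hsn
      | cons i t =>
        have htn : t.length = n := by simpa using hsn
        rw [hx' i t htn]
        exact c.O_moves _ (inv.gmem t htn.le) (hwO i)
    · exact invd'.memO s (by omega)
  · -- gmem
    intro s hs
    by_cases hsn : s.length = n + 1
    · cases s with
      | nil => simp at hsn
      | cons i t =>
        have htn : t.length = n := by simpa using hsn
        rw [hg' i t htn]
        exact c.htrans _ (hhΓ i) _ (inv.gmem t htn.le)
    · exact invd'.gmem s (by omega)
  · -- gx
    intro s hs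
    by_cases hsn : s.length = n + 1
    · cases s with
      | nil => simp at hsn
      | cons i t =>
        have htn : t.length = n := by simpa using hsn
        rw [hg' i t htn, hx' i t htn]
        simp [hhx0 i]
    · exact invd'.gx s (by omega)
  · -- legal
    intro s hs
    by_cases hsn : s.length = n + 1
    · cases s with
      | nil => simp at hsn
      | cons i t =>
        have htn : t.length = n := by simpa using hsn
        rw [hist_cons, SCLegal_cons]
        refine ⟨?_, ?_, ?_, ?_, ?_⟩
        · rw [hhist t htn.le]; exact inv.legal t htn.le
        · rw [hU' i t htn]; exact (hN i t htn).1
        · rw [hU' i t htn, hx' i t htn]; exact (hN i t htn).2.1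
        · rw [hx' i t htn]; exact c.O_moves _ (inv.gmem t htn.le) (hwO i)
        · intro hne
          have htne : t ≠ [] := by
            intro h0; rw [h0] at hne; exact hne rfl
          rw [hhist t htn.le, ← R_eq_sigma c d htne]
          exact (hsubA i t htn).trans (himgR i t htn)
    · exact invd'.legal s (by omega)
  · -- closU
    intro i s hlen
    by_cases hsn : s.length = n
    · rw [(hagree s hsn.le).1]
      exact (hclosR i s hsn).trans (hR s hsn.le).2.2
    · exact invd'.closU i s (by simp at hlen ⊢; omega)
  · -- clos
    intro i s hlen hsne
    by_cases hsn : s.length = n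
    · rw [hhist s hsn.le, ← R_eq_sigma c d hsne]
      exact hclosR i s hsn
    · exact invd'.clos i s (by simp at hlen ⊢; omega) hsne
  · -- sand
    intro i s t hst hlen z hz
    by_cases hsn : s.length = n
    · have htn : t.length = n := by omega
      rw [(hagree t htn.le).2.2, (hagree s hsn.le).2.2, (hagree t htn.le).1]
      obtain ⟨a, haA, haz⟩ := hsubA i s hsn hz
      have : (d.g s).symm z = a := by rw [← haz]; simp
      rw [this]
      exact (hR t htn.le).2.2 (hRstarsub t htn a (hAsub i haA))
    · exact invd'.sand i s t hst (by simp at hlen ⊢; omega) z hz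
  · -- coh
    intro i s t hst hlen
    by_cases hsn : s.length = n
    · have htn : t.length = n := by omega
      rw [hg' i s hsn, hg' i t htn, (hagree t htn.le).2.2, (hagree s hsn.le).2.2]
      ext x
      simp
    · exact invd'.coh i s t hst (by simp at hlen ⊢; omega)
  · -- wcond
    intro i j s t hij hst hlen k m hk hm
    by_cases hsn : s.length = n
    · have htn : t.length = n := by omega
      have hk' : k ≤ n := by simp at hk; omega
      have hm' : m ≤ n := by simp at hm; omega
      have hsub := Set.prod_mono (hsubA i s hsn) (hsubA j t htn)
      cases i <;> cases j <;> simp at hij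
      · exact hsub.trans (hW01 s t hsn htn k hk' m hm')
      · exact hsub.trans (hW10 s t hsn htn k hk' m hm')
    · exact invd'.wcond i j s t hij hst (by simp at hlen ⊢; omega) k m
        (by simp at hk ⊢; omega) (by simp at hm ⊢; omega)

/-- The base data. -/
def base (c : Ctx X) : Dat X :=
  ⟨fun _ => Set.univ, fun _ => c.x0, fun _ => Homeomorph.refl X⟩

lemma base_inv : Inv c 0 (base c) := by
  have hlen : ∀ s : List Bool, s.length ≤ 0 → s = [] := by
    intro s hs
    cases s with
    | nil => rfl
    | cons i t => simp at hs
  refine ⟨rfl, rfl, ?_, ?_, ?_, ?_, ?_, ?_, ?_, ?_, ?_, ?_, ?_⟩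
  · exact fun s _ => isOpen_univ
  · exact fun s _ => trivial
  · exact fun s _ => c.x0_mem
  · exact fun s _ => c.hrefl
  · exact fun s _ => rfl
  · intro s hs; rw [hlen s hs]; trivial
  · intro i s hs; simp at hs
  · intro i s hs; simp at hs
  · intro i s t _ hs; simp at hs
  · intro i s t _ hs; simp at hs
  · intro i j s t _ _ hs; simp at hs

/-- The full construction, by recursion on the stage. -/
noncomputable def seq (c : Ctx X) [RegularSpace X] : (n : ℕ) → {d : Dat X // Inv c n d}
  | 0 => ⟨base c, base_inv c⟩
  | n + 1 => ⟨(step c (seq c n).2).choose, (step c (seq c n).2).choose_spec.2⟩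

lemma seq_agree [RegularSpace X] (n : ℕ) : ∀ s : List Bool, s.length ≤ n →
    (seq c (n + 1)).1.U s = (seq c n).1.U s ∧
    (seq c (n + 1)).1.x s = (seq c n).1.x s ∧
    (seq c (n + 1)).1.g s = (seq c n).1.g s :=
  (step c (seq c n).2).choose_spec.1

lemma seq_agree_le [RegularSpace X] {m n : ℕ} (h : m ≤ n) :
    ∀ s : List Bool, s.length ≤ m →
    (seq c n).1.U s = (seq c m).1.U s ∧
    (seq c n).1.x s = (seq c m).1.x s ∧
    (seq c n).1.g s = (seq c m).1.g s := by
  induction n with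
  | zero =>
    have : m = 0 := by omega
    subst this
    exact fun s _ => ⟨rfl, rfl, rfl⟩
  | succ n ih =>
    rcases Nat.lt_or_ge m (n + 1) with hlt | hge
    · intro s hs
      have h1 := seq_agree c n s (by omega)
      have h2 := ih (by omega) s hs
      exact ⟨h1.1.trans h2.1, h1.2.1.trans h2.2.1, h1.2.2.trans h2.2.2⟩
    · have : m = n + 1 := by omega
      subst this
      exact fun s _ => ⟨rfl, rfl, rfl⟩

/-- The limit data. -/
noncomputable def lim (c : Ctx X) [RegularSpace X] : Dat X :=
  ⟨fun s => (seq c s.length).1.U s, fun s => (seq c s.length).1.x s,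
    fun s => (seq c s.length).1.g s⟩

lemma lim_inv [RegularSpace X] (n : ℕ) : Inv c n (lim c) := by
  refine Inv.of_agree c ?_ (seq c n).2
  intro s hs
  have := seq_agree_le c (show s.length ≤ n from hs) s le_rfl
  exact ⟨this.1.symm, this.2.1.symm, this.2.2.symm⟩

/-- Restriction of `y : ℕ → Bool` to a finite string (most recent bit first). -/
def pre (y : ℕ → Bool) : ℕ → List Bool
  | 0 => []
  | n + 1 => y n :: pre y n

@[simp] lemma pre_length (y : ℕ → Bool) : ∀ n, (pre y n).length = n := by
  intro n; induction n with
  | zero => rfl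
  | succ n ih => simp [pre, ih]

end S11

/-- the Choquet-space analog of the meager embedding theorem. -/
theorem stmt_11 {X : Type*} [TopologicalSpace X] [RegularSpace X]
    (Γ : Set (X ≃ₜ X)) (hΓ : IsHomeoGroup Γ)
    (O : Set X) (hO : ∃ x₀ : X, O = {y : X | ∃ γ ∈ Γ, γ x₀ = y})
    (hChoquet : StrongChoquetOver X O)
    (V : ℕ → Set (X × X)) (hGδ : ∀ n : ℕ, IsGδ (V n))
    (hdense : ∀ n : ℕ,
      Dense {p : ↥(closure O) × ↥(closure O) | ((p.1 : X), (p.2 : X)) ∈ V n}) :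
    ∃ φ : (ℕ → Bool) → Set X,
      (∀ y : ℕ → Bool, (φ y).Nonempty ∧ IsClosed (φ y) ∧ IsGδ (φ y)) ∧
      (∀ y z : ℕ → Bool, E0 y z → ∃ γ ∈ Γ, γ '' (φ z) = φ y) ∧
      (∀ y z : ℕ → Bool, ¬ E0 y z → (φ y) ×ˢ (φ z) ⊆ ⋂ n : ℕ, V n) := by
  classical
  obtain ⟨x₀, hOdef⟩ := hO
  obtain ⟨σ, hσ1, hσ2⟩ := hChoquet
  -- decompose each `V k` into countably many open sets
  have hWex : ∀ k : ℕ, ∃ w : ℕ → Set (X × X), (∀ m, IsOpen (w m)) ∧ V k = ⋂ m, w m := by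
    intro k
    obtain ⟨T, hTo, hTc, hTeq⟩ := hGδ k
    rcases T.eq_empty_or_nonempty with rfl | hne
    · exact ⟨fun _ => Set.univ, fun _ => isOpen_univ, by simp [hTeq]⟩
    · obtain ⟨f, hf⟩ := hTc.exists_eq_range hne
      refine ⟨f, fun m => hTo _ (by rw [hf]; exact Set.mem_range_self m), ?_⟩
      rw [hTeq, hf, Set.sInter_range]
  choose W hWopen hVW using hWex
  -- density in the convenient form
  have hD : ∀ (k : ℕ) (A B : Set X), IsOpen A → IsOpen B → (A ∩ O).Nonempty →
      (B ∩ O).Nonempty → ∃ a b : X, a ∈ A ∧ b ∈ B ∧ a ∈ closure O ∧ b ∈ closure O ∧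
        ∀ m, (a, b) ∈ W k m := by
    intro k A B hA hB hAO hBO
    have hsub : IsOpen ((Subtype.val ⁻¹' A : Set ↥(closure O)) ×ˢ
        (Subtype.val ⁻¹' B : Set ↥(closure O))) :=
      (hA.preimage continuous_subtype_val).prod (hB.preimage continuous_subtype_val)
    obtain ⟨a0, ha0A, ha0O⟩ := hAO
    obtain ⟨b0, hb0B, hb0O⟩ := hBO
    have hne : ((Subtype.val ⁻¹' A : Set ↥(closure O)) ×ˢ
        (Subtype.val ⁻¹' B : Set ↥(closure O))).Nonempty :=
      ⟨(⟨a0, subset_closure ha0O⟩, ⟨b0, subset_closure hb0O⟩), ha0A, hb0B⟩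
    obtain ⟨p, hp1, hp2⟩ := (hdense k).exists_mem_open hsub hne
    refine ⟨p.1.1, p.2.1, hp2.1, hp2.2, p.1.2, p.2.2, fun m => ?_⟩
    have : ((p.1 : X), (p.2 : X)) ∈ V k := hp1
    rw [hVW k] at this
    exact Set.mem_iInter.mp this m
  -- the context
  set c : S11.Ctx X := ⟨Γ, O, x₀, σ, W, hΓ.1, hΓ.2.1, hΓ.2.2, hOdef, hσ1, hWopen, hD⟩
    with hc
  set F : S11.Dat X := S11.lim c with hF
  have key : ∀ n : ℕ, S11.Inv c n F := fun n => S11.lim_inv c n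
  have hUopen : ∀ (y : ℕ → Bool) (n : ℕ), IsOpen (F.U (S11.pre y n)) :=
    fun y n => (key n).isOpen _ (by simp)
  have hclosUU : ∀ (y : ℕ → Bool) (n : ℕ),
      closure (F.U (S11.pre y (n + 1))) ⊆ F.U (S11.pre y n) :=
    fun y n => (key (n + 1)).closU (y n) (S11.pre y n) (by simp)
  have hchain : ∀ (y : ℕ → Bool) (m n : ℕ), m ≤ n →
      closure (F.U (S11.pre y n)) ⊆ closure (F.U (S11.pre y m)) := by
    intro y m n hmn
    induction n, hmn using Nat.le_induction with
    | base => exact subset_rfl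
    | succ n hn ih =>
      exact (subset_closure.trans (closure_mono (hclosUU y n))).trans ih
  refine ⟨fun y => ⋂ n, closure (F.U (S11.pre y n)), ?_, ?_, ?_⟩
  · -- nonempty, closed, Gδ
    intro y
    refine ⟨?_, isClosed_iInter (fun n => isClosed_closure), ?_⟩
    · -- nonempty via the strong Choquet game
      set f : ℕ → Set X × X :=
        fun k => (F.U (S11.pre y (k + 1)), F.x (S11.pre y (k + 1))) with hfdef
      have hsch : ∀ k, scHist f k = S11.hist F (S11.pre y k) := by
        intro k
        induction k with
        | zero => rfl
        | succ k ih => rw [show scHist f (k + 1) = f k :: scHist f k from rfl, ih]; rfl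
      have hlegal : ∀ k, SCLegal O σ (scHist f k) := by
        intro k
        rw [hsch k]
        exact (key k).legal (S11.pre y k) (by simp)
      obtain ⟨z, hz⟩ := hσ2 f hlegal
      refine ⟨z, Set.mem_iInter.mpr (fun n => ?_)⟩
      cases n with
      | zero =>
        have h0 : F.U ([] : List Bool) = Set.univ := (key 0).root_U
        show z ∈ closure (F.U ([] : List Bool))
        rw [h0]
        simp
      | succ n =>
        have hzn : z ∈ σ (scHist f (n + 1)) := Set.mem_iInter.mp hz n
        rw [hsch (n + 1)] at hzn
        have hleg := (key (n + 1)).legal (S11.pre y (n + 1)) (by simp)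
        rw [show S11.pre y (n + 1) = y n :: S11.pre y n from rfl, S11.hist_cons] at hleg hzn
        have := (hσ1 _ _ _ hleg).2.2 hzn
        exact subset_closure this
    · -- Gδ
      have heq : ⋂ n, closure (F.U (S11.pre y n)) = ⋂ n, F.U (S11.pre y n) := by
        apply Set.Subset.antisymm
        · intro z hz
          exact Set.mem_iInter.mpr fun n => hclosUU y n (Set.mem_iInter.mp hz (n + 1))
        · exact Set.iInter_mono fun n => subset_closure
      show IsGδ (⋂ n, closure (F.U (S11.pre y n)))
      rw [heq]
      exact IsGδ.iInter (fun n => (hUopen y n).isGδ)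
  · -- E0 invariance
    rintro y z ⟨Nn, hN⟩
    set γ : X ≃ₜ X := (F.g (S11.pre z Nn)).symm.trans (F.g (S11.pre y Nn)) with hγ
    have hγΓ : γ ∈ Γ :=
      c.htrans _ (c.hsymm _ ((key Nn).gmem (S11.pre z Nn) (by simp))) _
        ((key Nn).gmem (S11.pre y Nn) (by simp))
    have cohfun : ∀ n, Nn ≤ n →
        (F.g (S11.pre z n)).symm.trans (F.g (S11.pre y n)) = γ := by
      intro n hn
      induction n, hn using Nat.le_induction with
      | base => rfl
      | succ n hn ih =>
        have hyz : y n = z n := hN n hn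
        have hcoh := (key (n + 1)).coh (y n) (S11.pre y n) (S11.pre z n)
          (by simp) (by simp)
        calc (F.g (S11.pre z (n+1))).symm.trans (F.g (S11.pre y (n+1)))
            = (F.g (y n :: S11.pre z n)).symm.trans (F.g (y n :: S11.pre y n)) := by
              rw [show S11.pre z (n+1) = z n :: S11.pre z n from rfl, ← hyz]; rfl
          _ = (F.g (S11.pre z n)).symm.trans (F.g (S11.pre y n)) := hcoh
          _ = γ := ih
    have cohfun' : ∀ n, Nn ≤ n →
        (F.g (S11.pre y n)).symm.trans (F.g (S11.pre z n)) = γ.symm := by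
      intro n hn
      have := congrArg Homeomorph.symm (cohfun n hn)
      rw [← this]
      ext x
      simp
    have claim1 : ∀ w ∈ ⋂ n, closure (F.U (S11.pre z n)), γ w ∈ ⋂ n,
        closure (F.U (S11.pre y n)) := by
      intro w hw
      have key1 : ∀ n, Nn ≤ n → γ w ∈ closure (F.U (S11.pre y n)) := by
        intro n hn
        have himg : γ '' (F.U (S11.pre z (n + 1))) ⊆ F.U (S11.pre y n) := by
          rintro _ ⟨u, hu, rfl⟩
          rw [← cohfun n hn]
          have hsand := (key (n + 1)).sand (z n) (S11.pre z n) (S11.pre y n)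
            (by simp) (by simp) u
            (by rw [show (z n :: S11.pre z n) = S11.pre z (n+1) from rfl]; exact hu)
          simpa using hsand
        have hw1 : w ∈ closure (F.U (S11.pre z (n + 1))) := Set.mem_iInter.mp hw (n + 1)
        have : γ w ∈ γ '' closure (F.U (S11.pre z (n + 1))) := Set.mem_image_of_mem _ hw1
        rw [γ.image_closure] at this
        exact closure_mono himg this
      refine Set.mem_iInter.mpr (fun n => ?_)
      exact hchain y n (max n Nn) (le_max_left _ _) (key1 (max n Nn) (le_max_right _ _))
    have claim2 : ∀ w ∈ ⋂ n, closure (F.U (S11.pre y n)), γ.symm w ∈ ⋂ n,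
        closure (F.U (S11.pre z n)) := by
      intro w hw
      have key1 : ∀ n, Nn ≤ n → γ.symm w ∈ closure (F.U (S11.pre z n)) := by
        intro n hn
        have himg : γ.symm '' (F.U (S11.pre y (n + 1))) ⊆ F.U (S11.pre z n) := by
          rintro _ ⟨u, hu, rfl⟩
          rw [← cohfun' n hn]
          have hsand := (key (n + 1)).sand (y n) (S11.pre y n) (S11.pre z n)
            (by simp) (by simp) u
            (by rw [show (y n :: S11.pre y n) = S11.pre y (n+1) from rfl]; exact hu)
          simpa using hsand
        have hw1 : w ∈ closure (F.U (S11.pre y (n + 1))) := Set.mem_iInter.mp hw (n + 1)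
        have : γ.symm w ∈ γ.symm '' closure (F.U (S11.pre y (n + 1))) :=
          Set.mem_image_of_mem _ hw1
        rw [γ.symm.image_closure] at this
        exact closure_mono himg this
      refine Set.mem_iInter.mpr (fun n => ?_)
      exact hchain z n (max n Nn) (le_max_left _ _) (key1 (max n Nn) (le_max_right _ _))
    refine ⟨γ, hγΓ, Set.Subset.antisymm ?_ ?_⟩
    · rintro _ ⟨w, hw, rfl⟩
      exact claim1 w hw
    · intro w hw
      exact ⟨γ.symm w, claim2 w hw, by simp⟩
  · -- non-E0 pairs land in all the V's
    intro y z hE0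
    have hdiff : ∀ N : ℕ, ∃ n, N ≤ n ∧ y n ≠ z n := by
      intro N
      by_contra hcon
      push_neg at hcon
      exact hE0 ⟨N, fun n hn => hcon n hn⟩
    rintro ⟨a, b⟩ ⟨ha, hb⟩
    refine Set.mem_iInter.mpr (fun k => ?_)
    rw [hVW k]
    refine Set.mem_iInter.mpr (fun m => ?_)
    obtain ⟨n, hn1, hn2⟩ := hdiff (max k m)
    have hw := (key (n + 1)).wcond (y n) (z n) (S11.pre y n) (S11.pre z n) hn2
      (by simp) (by simp) k m (by simp; omega) (by simp; omega)
    have haU : a ∈ F.U (S11.pre y (n + 1)) :=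
      hclosUU y (n + 1) (Set.mem_iInter.mp ha (n + 2))
    have hbU : b ∈ F.U (S11.pre z (n + 1)) :=
      hclosUU z (n + 1) (Set.mem_iInter.mp hb (n + 2))
    exact hw ⟨haU, hbU⟩
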